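/- Let l ≥ 3 and ν : ZMod l → ℤ × ℤ encode a smooth complete fan in ℤ², let u ∈ ℤ × ℤ, and let i₀ ∈ ZMod l satisfy ⟨ν i₀, u⟩ = −1. Set S_u = {i ∈ ZMod l : ⟨ν i, u⟩ < 0}. Then every connected component of the cyclic adjacency graph on S_u \ {i₀} contains i₀ − 1 or i₀ + 1. This is the two-dimensional case of the claim, proved in the paper's Lemma, that every connected component of Γ_{i₀}(u) has nonempty intersection with Γ_{i₀}°(u). -/

import Mathlib

/-- The pairing ⟨v, u⟩ = v.1 * u.1 + v.2 * u.2 between N = ℤ² and M = ℤ². -/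
def pairing (v u : ℤ × ℤ) : ℤ := v.1 * u.1 + v.2 * u.2

/-- det(v, w) = v.1 * w.2 − v.2 * w.1. -/
def det2 (v w : ℤ × ℤ) : ℤ := v.1 * w.2 - v.2 * w.1

/-- View a lattice point in ℚ². -/
def toQ (v : ℤ × ℤ) : ℚ × ℚ := ((v.1 : ℚ), (v.2 : ℚ))

/-- The closed cone spanned by a and b. -/
def closedCone (a b : ℤ × ℤ) : Set (ℚ × ℚ) :=
  {x | ∃ s t : ℚ, 0 ≤ s ∧ 0 ≤ t ∧ x = s • toQ a + t • toQ b}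

/-- The open cone spanned by a and b. -/
def openCone (a b : ℤ × ℤ) : Set (ℚ × ℚ) :=
  {x | ∃ s t : ℚ, 0 < s ∧ 0 < t ∧ x = s • toQ a + t • toQ b}

/-- ν : ZMod l → ℤ × ℤ encodes a smooth complete fan in ℤ²:
(i) each successive pair of ray generators has determinant 1;
(ii) the closed two-dimensional cones cover ℚ²;
(iii) the open two-dimensional cones are pairwise disjoint. -/
structure IsSmoothCompleteFan {l : ℕ} (ν : ZMod l → ℤ × ℤ) : Prop where
  det_one : ∀ i : ZMod l, det2 (ν i) (ν (i + 1)) = 1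
  covers : ∀ x : ℚ × ℚ, ∃ i : ZMod l, x ∈ closedCone (ν i) (ν (i + 1))
  disjointOpen : ∀ i j : ZMod l, i ≠ j →
    Disjoint (openCone (ν i) (ν (i + 1))) (openCone (ν j) (ν (j + 1)))

/-- The cycle graph on ZMod l: distinct j, k are adjacent iff k = j + 1 or j = k + 1. -/
def cycleGraph (l : ℕ) : SimpleGraph (ZMod l) where
  Adj j k := j ≠ k ∧ (k = j + 1 ∨ j = k + 1)
  symm := by
    constructor
    intro a b h
    exact ⟨h.1.symm, h.2.symm⟩
  loopless := by
    constructor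
    intro a h
    exact h.1 rfl

section helpers


private lemma small_pos (A B : ℚ) (h : 0 < A ∨ (0 ≤ A ∧ 0 < B)) :
    ∃ δ : ℚ, 0 < δ ∧ ∀ ε : ℚ, 0 < ε → ε ≤ δ → 0 < A + ε * B := by
  rcases h with h | ⟨h0, hB⟩
  · refine ⟨A / (1 + |B|), by positivity, fun ε hε hεδ => ?_⟩
    have hB1 : 0 < 1 + |B| := by positivity
    have h1 : -|B| ≤ B := neg_abs_le B
    have h2 : ε * (1 + |B|) ≤ A := (le_div_iff₀ hB1).mp hεδ
    nlinarith [abs_nonneg B, mul_le_mul_of_nonneg_left h1 hε.le]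
  · exact ⟨1, one_pos, fun ε hε _ => by nlinarith⟩

private lemma exists_eps (A1 B1 A2 B2 A3 B3 A4 B4 : ℚ)
    (h1 : 0 < A1 ∨ (0 ≤ A1 ∧ 0 < B1)) (h2 : 0 < A2 ∨ (0 ≤ A2 ∧ 0 < B2))
    (h3 : 0 < A3 ∨ (0 ≤ A3 ∧ 0 < B3)) (h4 : 0 < A4 ∨ (0 ≤ A4 ∧ 0 < B4)) :
    ∃ ε : ℚ, 0 < ε ∧ 0 < A1 + ε * B1 ∧ 0 < A2 + ε * B2 ∧ 0 < A3 + ε * B3 ∧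
      0 < A4 + ε * B4 := by
  obtain ⟨d1, hd1, H1⟩ := small_pos A1 B1 h1
  obtain ⟨d2, hd2, H2⟩ := small_pos A2 B2 h2
  obtain ⟨d3, hd3, H3⟩ := small_pos A3 B3 h3
  obtain ⟨d4, hd4, H4⟩ := small_pos A4 B4 h4
  refine ⟨min (min d1 d2) (min d3 d4), by positivity, ?_, ?_, ?_, ?_⟩
  · exact H1 _ (by positivity) ((min_le_left _ _).trans (min_le_left _ _))
  · exact H2 _ (by positivity) ((min_le_left _ _).trans (min_le_right _ _))
  · exact H3 _ (by positivity) ((min_le_right _ _).trans (min_le_left _ _))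
  · exact H4 _ (by positivity) ((min_le_right _ _).trans (min_le_right _ _))

private lemma core (E1 E2 G1 G2 F1 F2 H1 H2 U1 U2 : ℚ)
    (hd1 : E1 * G2 - E2 * G1 = 1) (hd2 : F1 * H2 - F2 * H1 = 1)
    (hi1 : E1 * U1 + E2 * U2 < 0) (hi2 : 0 ≤ G1 * U1 + G2 * U2)
    (hj1 : F1 * U1 + F2 * U2 < 0) (hj2 : 0 ≤ H1 * U1 + H2 * U2) :
    ∃ s t s' t' : ℚ, 0 < s ∧ 0 < t ∧ 0 < s' ∧ 0 < t' ∧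
      s * E1 + t * G1 = s' * F1 + t' * H1 ∧
      s * E2 + t * G2 = s' * F2 + t' * H2 := by
  have hU : 0 < U1 ^ 2 + U2 ^ 2 := by
    rcases eq_or_ne U1 0 with h1 | h1
    · rcases eq_or_ne U2 0 with h2 | h2
      · exfalso; rw [h1, h2] at hi1; nlinarith
      · have h2' : 0 < U2 ^ 2 := lt_of_le_of_ne (sq_nonneg U2) (Ne.symm (pow_ne_zero 2 h2))
        linarith [sq_nonneg U1]
    · have h1' : 0 < U1 ^ 2 := lt_of_le_of_ne (sq_nonneg U1) (Ne.symm (pow_ne_zero 2 h1))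
      linarith [sq_nonneg U2]
  have e1 : (((G1*U1+G2*U2)*E1 - (E1*U1+E2*U2)*G1) - ((H1*U1+H2*U2)*F1 - (F1*U1+F2*U2)*H1))
      * (U1 ^ 2 + U2 ^ 2) = 0 := by
    linear_combination (U1^2+U2^2) * U2 * hd1 - (U1^2+U2^2) * U2 * hd2
  have e2 : (((G1*U1+G2*U2)*E2 - (E1*U1+E2*U2)*G2) - ((H1*U1+H2*U2)*F2 - (F1*U1+F2*U2)*H2))
      * (U1 ^ 2 + U2 ^ 2) = 0 := by
    linear_combination -((U1^2+U2^2) * U1) * hd1 + (U1^2+U2^2) * U1 * hd2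
  have hxy1 : (G1*U1+G2*U2)*E1 - (E1*U1+E2*U2)*G1 = (H1*U1+H2*U2)*F1 - (F1*U1+F2*U2)*H1 := by
    rcases mul_eq_zero.mp e1 with h | h
    · exact sub_eq_zero.mp h
    · exact absurd h hU.ne'
  have hxy2 : (G1*U1+G2*U2)*E2 - (E1*U1+E2*U2)*G2 = (H1*U1+H2*U2)*F2 - (F1*U1+F2*U2)*H2 := by
    rcases mul_eq_zero.mp e2 with h | h
    · exact sub_eq_zero.mp h
    · exact absurd h hU.ne'
  have k1 : F1*((G1*U1+G2*U2)*E2 - (E1*U1+E2*U2)*G2) - F2*((G1*U1+G2*U2)*E1 - (E1*U1+E2*U2)*G1)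
      = -(F1*U1+F2*U2) := by
    rw [hxy1, hxy2]; linear_combination (-(F1*U1+F2*U2)) * hd2
  have k2 : E1*((H1*U1+H2*U2)*F2 - (F1*U1+F2*U2)*H2) - E2*((H1*U1+H2*U2)*F1 - (F1*U1+F2*U2)*H1)
      = -(E1*U1+E2*U2) := by
    rw [← hxy1, ← hxy2]; linear_combination (-(E1*U1+E2*U2)) * hd1
  obtain ⟨ε, hε, hC1, hC2, hC3, hC4⟩ := exists_eps
    (-(E1*U1+E2*U2)) (E1*F2 - E2*F1)
    (G1*U1+G2*U2) (1 + (F1*G2 - F2*G1))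
    (-(F1*U1+F2*U2)) (F1*E2 - F2*E1)
    (H1*U1+H2*U2) (1 + (E1*H2 - E2*H1))
    (Or.inl (by linarith))
    (by
      rcases lt_or_eq_of_le hi2 with h | h
      · exact Or.inl h
      · refine Or.inr ⟨hi2, ?_⟩
        have hD2 : (-(E1*U1+E2*U2)) * (F1*G2 - F2*G1) = -(F1*U1+F2*U2) := by
          linear_combination k1 + (F1*E2 - F2*E1) * h
        nlinarith)
    (Or.inl (by linarith))
    (by
      rcases lt_or_eq_of_le hj2 with h | h
      · exact Or.inl h
      · refine Or.inr ⟨hj2, ?_⟩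
        have hD3 : (-(F1*U1+F2*U2)) * (E1*H2 - E2*H1) = -(E1*U1+E2*U2) := by
          linear_combination k2 + (E1*F2 - E2*F1) * h
        nlinarith)
  refine ⟨(G1*U1+G2*U2) + ε * (1 + (F1*G2 - F2*G1)),
          (-(E1*U1+E2*U2)) + ε * (E1*F2 - E2*F1),
          (H1*U1+H2*U2) + ε * (1 + (E1*H2 - E2*H1)),
          (-(F1*U1+F2*U2)) + ε * (F1*E2 - F2*E1),
          hC2, hC1, hC4, hC3, ?_, ?_⟩
  · linear_combination hxy1 + (ε*F1) * hd1 - (ε*E1) * hd2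
  · linear_combination hxy2 + (ε*F2) * hd1 - (ε*E2) * hd2

/-- There is at most one "ascending crossing" of the hyperplane u^⊥. -/
private lemma no_two_ascending {l : ℕ} {ν : ZMod l → ℤ × ℤ}
    (hfan : IsSmoothCompleteFan ν) {u : ℤ × ℤ} {i j : ZMod l} (hij : i ≠ j)
    (hi1 : pairing (ν i) u < 0) (hi2 : 0 ≤ pairing (ν (i + 1)) u)
    (hj1 : pairing (ν j) u < 0) (hj2 : 0 ≤ pairing (ν (j + 1)) u) : False := by
  have d1 := hfan.det_one i
  have d2 := hfan.det_one j
  simp only [det2] at d1 d2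
  simp only [pairing] at hi1 hi2 hj1 hj2
  obtain ⟨s, t, s', t', hs, ht, hs', ht', he1, he2⟩ :=
    core ((ν i).1 : ℚ) ((ν i).2 : ℚ) ((ν (i+1)).1 : ℚ) ((ν (i+1)).2 : ℚ)
      ((ν j).1 : ℚ) ((ν j).2 : ℚ) ((ν (j+1)).1 : ℚ) ((ν (j+1)).2 : ℚ)
      (u.1 : ℚ) (u.2 : ℚ)
      (by exact_mod_cast d1) (by exact_mod_cast d2)
      (by exact_mod_cast hi1) (by exact_mod_cast hi2)
      (by exact_mod_cast hj1) (by exact_mod_cast hj2)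
  have hz1 : s • toQ (ν i) + t • toQ (ν (i+1)) ∈ openCone (ν i) (ν (i+1)) :=
    ⟨s, t, hs, ht, rfl⟩
  have hz2 : s • toQ (ν i) + t • toQ (ν (i+1)) ∈ openCone (ν j) (ν (j+1)) := by
    refine ⟨s', t', hs', ht', ?_⟩
    have p1 : (s • toQ (ν i) + t • toQ (ν (i+1))).1 = (s' • toQ (ν j) + t' • toQ (ν (j+1))).1 := by
      simp only [Prod.fst_add, Prod.smul_fst, toQ, smul_eq_mul]
      exact he1
    have p2 : (s • toQ (ν i) + t • toQ (ν (i+1))).2 = (s' • toQ (ν j) + t' • toQ (ν (j+1))).2 := by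
      simp only [Prod.snd_add, Prod.smul_snd, toQ, smul_eq_mul]
      exact he2
    exact Prod.ext_iff.mpr ⟨p1, p2⟩
  exact Set.disjoint_left.mp (hfan.disjointOpen i j hij) hz1 hz2


private lemma chain_reach {l : ℕ} (hl : 3 ≤ l) (S : Set (ZMod l)) (v : ZMod l) :
    ∀ n : ℕ, ∀ h : (∀ k : ℕ, k ≤ n → v + (k : ZMod l) ∈ S),
    ((cycleGraph l).induce S).Reachable
      ⟨v, by simpa using h 0 (Nat.zero_le n)⟩ ⟨v + (n : ZMod l), h n le_rfl⟩ := by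
  haveI : Fact (1 < l) := ⟨by omega⟩
  intro n
  induction n with
  | zero =>
    intro h
    have : (⟨v, by simpa using h 0 le_rfl⟩ : S) = ⟨v + ((0:ℕ) : ZMod l), h 0 le_rfl⟩ := by
      apply Subtype.ext; simp
    rw [← this]
  | succ n ih =>
    intro h
    have h' : ∀ k : ℕ, k ≤ n → v + (k : ZMod l) ∈ S := fun k hk => h k (hk.trans (Nat.le_succ n))
    refine (ih h').trans ?_
    have hadj : ((cycleGraph l).induce S).Adj ⟨v + (n : ZMod l), h' n le_rfl⟩
        ⟨v + ((n+1 : ℕ) : ZMod l), h (n+1) le_rfl⟩ := by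
      show (cycleGraph l).Adj (v + (n : ZMod l)) (v + ((n+1 : ℕ) : ZMod l))
      refine ⟨?_, Or.inl (by push_cast; ring)⟩
      intro hEq
      push_cast at hEq
      have h1 : (1 : ZMod l) = 0 := by linear_combination -hEq
      exact one_ne_zero h1
    exact hadj.reachable

end helpers

/-- The n = 2 case of the claim in the paper's Lemma: every connected component of the
cyclic adjacency graph on S_u \ {i₀} (where S_u = {i : ⟨ν i, u⟩ < 0} and
⟨ν i₀, u⟩ = −1) contains i₀ − 1 or i₀ + 1. -/
theorem components_meet_neighbors (l : ℕ) (hl : 3 ≤ l) (ν : ZMod l → ℤ × ℤ)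
    (hfan : IsSmoothCompleteFan ν) (u : ℤ × ℤ) (i₀ : ZMod l)
    (hi₀ : pairing (ν i₀) u = -1) :
    ∀ C : ((cycleGraph l).induce
        ({i : ZMod l | pairing (ν i) u < 0} \ {i₀})).ConnectedComponent,
      ∃ v : ({i : ZMod l | pairing (ν i) u < 0} \ {i₀} : Set (ZMod l)),
        ((cycleGraph l).induce
          ({i : ZMod l | pairing (ν i) u < 0} \ {i₀})).connectedComponentMk v = C ∧
        ((v : ZMod l) = i₀ - 1 ∨ (v : ZMod l) = i₀ + 1) := by
  classical
  haveI : NeZero l := ⟨by omega⟩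
  haveI : Fact (1 < l) := ⟨by omega⟩
  set S : Set (ZMod l) := {i : ZMod l | pairing (ν i) u < 0} \ {i₀} with hS
  intro C
  obtain ⟨⟨v0, hv0mem⟩, hv⟩ := C.exists_rep
  have hv0P : pairing (ν v0) u < 0 := hv0mem.1
  have hv0ne : v0 ≠ i₀ := hv0mem.2
  -- first walk, upward from v0
  have hi₀notS : i₀ ∉ S := fun h => h.2 rfl
  have hex1 : ∃ n : ℕ, v0 + ((n + 1 : ℕ) : ZMod l) ∉ S := by
    refine ⟨(i₀ - v0).val - 1, ?_⟩
    have hvne : (i₀ - v0).val ≠ 0 := by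
      rw [Ne, ZMod.val_eq_zero, sub_eq_zero]
      exact fun h => hv0ne h.symm
    have hs : ((i₀ - v0).val - 1 + 1 : ℕ) = (i₀ - v0).val := by omega
    rw [hs, ZMod.natCast_val, ZMod.cast_id]
    have : v0 + (i₀ - v0) = i₀ := by ring
    rw [this]
    exact hi₀notS
  set n₀ := Nat.find hex1 with hn₀def
  have hspec1 : v0 + ((n₀ + 1 : ℕ) : ZMod l) ∉ S := Nat.find_spec hex1
  have hmin1 : ∀ k, k < n₀ → v0 + ((k + 1 : ℕ) : ZMod l) ∈ S :=
    fun k hk => not_not.mp (Nat.find_min hex1 hk)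
  have hrun1 : ∀ k : ℕ, k ≤ n₀ → v0 + (k : ZMod l) ∈ S := by
    intro k hk
    cases k with
    | zero => simpa using hv0mem
    | succ m => exact hmin1 m (by omega)
  have hreach1 : ((cycleGraph l).induce S).Reachable ⟨v0, hv0mem⟩
      ⟨v0 + (n₀ : ZMod l), hrun1 n₀ le_rfl⟩ := chain_reach hl S v0 n₀ hrun1
  have hmkj : ((cycleGraph l).induce S).connectedComponentMk
      ⟨v0 + (n₀ : ZMod l), hrun1 n₀ le_rfl⟩ = C :=
    (SimpleGraph.ConnectedComponent.sound hreach1.symm).trans hv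
  by_cases hcase : v0 + ((n₀ + 1 : ℕ) : ZMod l) = i₀
  · refine ⟨⟨v0 + (n₀ : ZMod l), hrun1 n₀ le_rfl⟩, hmkj, Or.inl ?_⟩
    push_cast at hcase
    refine eq_sub_iff_add_eq.mpr ?_
    linear_combination hcase
  · have hnotP : ¬ pairing (ν (v0 + ((n₀ + 1 : ℕ) : ZMod l))) u < 0 :=
      fun hP => hspec1 ⟨hP, hcase⟩
    have hj1 : pairing (ν (v0 + (n₀ : ZMod l))) u < 0 := (hrun1 n₀ le_rfl).1
    have hj2 : 0 ≤ pairing (ν ((v0 + (n₀ : ZMod l)) + 1)) u := by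
      have hco : v0 + ((n₀ + 1 : ℕ) : ZMod l) = (v0 + (n₀ : ZMod l)) + 1 := by
        push_cast; ring
      rw [hco] at hnotP
      exact not_lt.mp hnotP
    -- second walk, upward from i₀
    have hwne : v0 + ((n₀ + 1 : ℕ) : ZMod l) ≠ i₀ := hcase
    have hvalne : ((v0 + ((n₀ + 1 : ℕ) : ZMod l)) - i₀).val ≠ 0 := by
      rw [Ne, ZMod.val_eq_zero, sub_eq_zero]
      exact hwne
    have hwit : ¬ pairing (ν (i₀ +
        (((((v0 + ((n₀ + 1 : ℕ) : ZMod l)) - i₀).val - 1) + 1 : ℕ) : ZMod l))) u < 0 := by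
      have hs : ((((v0 + ((n₀ + 1 : ℕ) : ZMod l)) - i₀).val - 1) + 1 : ℕ)
          = ((v0 + ((n₀ + 1 : ℕ) : ZMod l)) - i₀).val := by omega
      rw [hs, ZMod.natCast_val, ZMod.cast_id]
      have : i₀ + ((v0 + ((n₀ + 1 : ℕ) : ZMod l)) - i₀) = v0 + ((n₀ + 1 : ℕ) : ZMod l) := by
        ring
      rw [this]
      exact hnotP
    have hex2 : ∃ n : ℕ, ¬ pairing (ν (i₀ + ((n + 1 : ℕ) : ZMod l))) u < 0 := ⟨_, hwit⟩
    set m₁ := Nat.find hex2 with hm₁def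
    have hfle : m₁ ≤ (((v0 + ((n₀ + 1 : ℕ) : ZMod l)) - i₀).val - 1) := Nat.find_le hwit
    have hvlt : ((v0 + ((n₀ + 1 : ℕ) : ZMod l)) - i₀).val < l := ZMod.val_lt _
    have hspec2 : ¬ pairing (ν (i₀ + ((m₁ + 1 : ℕ) : ZMod l))) u < 0 := Nat.find_spec hex2
    have hmin2 : ∀ k, k < m₁ → pairing (ν (i₀ + ((k + 1 : ℕ) : ZMod l))) u < 0 :=
      fun k hk => not_not.mp (Nat.find_min hex2 hk)
    have hj'2 : 0 ≤ pairing (ν ((i₀ + (m₁ : ZMod l)) + 1)) u := by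
      have hco : i₀ + ((m₁ + 1 : ℕ) : ZMod l) = (i₀ + (m₁ : ZMod l)) + 1 := by
        push_cast; ring
      rw [hco] at hspec2
      exact not_lt.mp hspec2
    have hj'1 : pairing (ν (i₀ + (m₁ : ZMod l))) u < 0 := by
      rcases Nat.eq_zero_or_pos m₁ with h0 | hpos
      · rw [h0]; simp only [Nat.cast_zero, add_zero]; rw [hi₀]; norm_num
      · have h := hmin2 (m₁ - 1) (by omega)
        have hc : ((m₁ - 1 + 1 : ℕ) : ZMod l) = (m₁ : ZMod l) := by congr 1; omega
        rwa [hc] at h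
    by_cases hjj : v0 + (n₀ : ZMod l) = i₀ + (m₁ : ZMod l)
    · -- the two crossings coincide; connect i₀ + 1 to v0 + n₀
      have hm₁pos : m₁ ≠ 0 := by
        intro h0
        rw [h0] at hjj
        simp only [Nat.cast_zero, add_zero] at hjj
        exact (hrun1 n₀ le_rfl).2 hjj
      obtain ⟨m₂, hm₂⟩ : ∃ m₂, m₁ = m₂ + 1 := ⟨m₁ - 1, by omega⟩
      have hrun2 : ∀ k : ℕ, k ≤ m₂ → (i₀ + 1) + (k : ZMod l) ∈ S := by
        intro k hk
        have hP : pairing (ν (i₀ + ((k + 1 : ℕ) : ZMod l))) u < 0 := hmin2 k (by omega)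
        have hco : (i₀ + 1) + (k : ZMod l) = i₀ + ((k + 1 : ℕ) : ZMod l) := by
          push_cast; ring
        rw [hco]
        refine ⟨hP, ?_⟩
        intro hEq
        have hEq' : i₀ + ((k + 1 : ℕ) : ZMod l) = i₀ := hEq
        have hz : ((k + 1 : ℕ) : ZMod l) = 0 := by linear_combination hEq'
        rw [ZMod.natCast_eq_zero_iff] at hz
        have := Nat.le_of_dvd (by omega) hz
        omega
      have hreach2 : ((cycleGraph l).induce S).Reachable
          ⟨i₀ + 1, by simpa using hrun2 0 (Nat.zero_le _)⟩
          ⟨(i₀ + 1) + (m₂ : ZMod l), hrun2 m₂ le_rfl⟩ := chain_reach hl S (i₀ + 1) m₂ hrun2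
      have hvals : (i₀ + 1) + (m₂ : ZMod l) = v0 + (n₀ : ZMod l) := by
        rw [hjj, hm₂]
        push_cast
        ring
      have heq : (⟨(i₀ + 1) + (m₂ : ZMod l), hrun2 m₂ le_rfl⟩ : S)
          = ⟨v0 + (n₀ : ZMod l), hrun1 n₀ le_rfl⟩ := Subtype.ext hvals
      refine ⟨⟨i₀ + 1, by simpa using hrun2 0 (Nat.zero_le _)⟩, ?_, Or.inr rfl⟩
      calc ((cycleGraph l).induce S).connectedComponentMk _
          = ((cycleGraph l).induce S).connectedComponentMk
            ⟨(i₀ + 1) + (m₂ : ZMod l), hrun2 m₂ le_rfl⟩ :=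
            SimpleGraph.ConnectedComponent.sound hreach2
        _ = _ := by rw [heq]; exact hmkj
    · exact (no_two_ascending hfan hjj hj1 hj2 hj'1 hj'2).elim
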